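/- Let m, b, z be positive integers with b ≥ z and b ≥ m·(z − 1) + 1. Then b^m ≤ b·C(m·b − m·z + m − 1, m − 1), where C(·,·) denotes the binomial coefficient. -/

import Mathlib

open Finset in
lemma aux_pow_mul_factorial_le (k n : ℕ) (hk : k ≤ n) :
    n ^ k * k.factorial ≤ k ^ k * n.descFactorial k := by
  have hfac : (∏ i ∈ range k, (k - i)) = k.factorial := by
    rw [← Finset.prod_range_reflect]
    rw [Finset.prod_congr rfl (fun i hi => ?_), Finset.prod_range_add_one_eq_factorial]
    · simp at hi; omega
  calc n ^ k * k.factorial = ∏ i ∈ range k, n * (k - i) := by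
        rw [Finset.prod_mul_distrib, Finset.prod_const, card_range, hfac]
    _ ≤ ∏ i ∈ range k, k * (n - i) := by
        apply Finset.prod_le_prod' (fun i hi => ?_)
        simp only [mem_range] at hi
        have : k * i ≤ n * i := Nat.mul_le_mul_right i hk
        calc n * (k - i) = n * k - n * i := Nat.mul_sub ..
          _ ≤ k * n - k * i := by rw [Nat.mul_comm n k]; omega
          _ = k * (n - i) := (Nat.mul_sub ..).symm
    _ = k ^ k * n.descFactorial k := by
        rw [Finset.prod_mul_distrib, Finset.prod_const, card_range,
          Nat.descFactorial_eq_prod_range]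

lemma aux_pow_le_choose (b k n : ℕ) (h : b * k ≤ n) : b ^ k ≤ n.choose k := by
  rcases Nat.eq_zero_or_pos k with rfl | hk
  · simp
  rcases Nat.eq_zero_or_pos b with rfl | hb
  · rw [Nat.zero_pow hk]; exact Nat.zero_le _
  have hkn : k ≤ n := le_trans (by nlinarith) h
  have key := aux_pow_mul_factorial_le k n hkn
  rw [Nat.descFactorial_eq_factorial_mul_choose, ← Nat.mul_assoc] at key
  have h1 : n ^ k ≤ k ^ k * n.choose k := by
    have := Nat.le_of_mul_le_mul_right (by
      calc n ^ k * k.factorial ≤ k ^ k * k.factorial * n.choose k := key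
        _ = k ^ k * n.choose k * k.factorial := by ring) k.factorial_pos
    exact this
  have h2 : b ^ k * k ^ k ≤ n ^ k := by
    calc b ^ k * k ^ k = (b * k) ^ k := (Nat.mul_pow ..).symm
      _ ≤ n ^ k := Nat.pow_le_pow_left h k
  exact Nat.le_of_mul_le_mul_right (by calc b ^ k * k ^ k ≤ n ^ k := h2
    _ ≤ k ^ k * n.choose k := h1
    _ = n.choose k * k ^ k := Nat.mul_comm ..) (pow_pos hk k)

theorem subpacketization_core_ineq (m b z : ℕ) (hm : 0 < m) (hb : 0 < b)
    (hz : 0 < z) (hbz : z ≤ b) (hb2 : m * (z - 1) + 1 ≤ b) :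
    b ^ m ≤ b * Nat.choose (m * b - m * z + m - 1) (m - 1) := by
  have hn : b * (m - 1) ≤ m * b - m * z + m - 1 := by
    have e1 : b * (m - 1) = m * b - b := by
      rw [Nat.mul_sub, Nat.mul_one, Nat.mul_comm]
    have e2 : m * (z - 1) = m * z - m := by rw [Nat.mul_sub, Nat.mul_one]
    have e3 : m * z ≤ m * b := Nat.mul_le_mul_left m hbz
    have e4 : m ≤ m * z := Nat.le_mul_of_pos_right m hz
    omega
  calc b ^ m = b * b ^ (m - 1) := by
        rw [← pow_succ']; congr 1; omega
    _ ≤ b * Nat.choose (m * b - m * z + m - 1) (m - 1) :=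
        Nat.mul_le_mul_left b (aux_pow_le_choose b (m - 1) _ hn)
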